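/- The 4×4 Rook's graph and the Shrikhande graph are not isomorphic, because the neighborhood of every vertex in the Rook's graph induces a subgraph with two connected components (two triangles), while the neighborhood of every vertex in the Shrikhande graph induces a connected subgraph (a 6-cycle). -/

import Mathlib

/-- The 4×4 Rook's graph. -/
def rookGraph : SimpleGraph (Fin 4 × Fin 4) where
  Adj p q := p ≠ q ∧ (p.1 = q.1 ∨ p.2 = q.2)
  symm := by
    constructor
    intro p q h
    exact ⟨h.1.symm, h.2.imp Eq.symm Eq.symm⟩
  loopless := by
    constructor
    intro p h
    exact h.1 rfl

/-- The Shrikhande graph. -/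
def shrikhandeGraph : SimpleGraph (ZMod 4 × ZMod 4) where
  Adj u v := u - v = (1,0) ∨ u - v = (3,0) ∨ u - v = (0,1) ∨ u - v = (0,3) ∨
    u - v = (1,1) ∨ u - v = (3,3)
  symm := by constructor; intro u v h; revert h; revert v; revert u; decide
  loopless := by constructor; intro u; revert u; decide

instance : DecidableRel rookGraph.Adj := fun p q =>
  inferInstanceAs (Decidable (p ≠ q ∧ (p.1 = q.1 ∨ p.2 = q.2)))

instance : DecidableRel shrikhandeGraph.Adj := fun _ _ =>
  inferInstanceAs (Decidable (_ ∨ _ ∨ _ ∨ _ ∨ _ ∨ _))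

lemma rook_nbhd : ∀ a : Fin 4 × Fin 4,
    Nat.card (rookGraph.induce (rookGraph.neighborSet a)).ConnectedComponent = 2 := by
  simp only [Nat.card_eq_fintype_card]
  decide

set_option maxHeartbeats 4000000 in
lemma shrikhande_nbhd_preconnected : ∀ a : ZMod 4 × ZMod 4,
    (shrikhandeGraph.induce (shrikhandeGraph.neighborSet a)).Preconnected := by
  decide

lemma shrikhande_nbhd : ∀ a : ZMod 4 × ZMod 4,
    (shrikhandeGraph.induce (shrikhandeGraph.neighborSet a)).Connected := by
  intro a
  rw [SimpleGraph.connected_iff]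
  refine ⟨shrikhande_nbhd_preconnected a, ?_⟩
  have h : a - (a + ((1 : ZMod 4), (0 : ZMod 4))) = (3, 0) := by
    rw [sub_add_cancel_left]; decide
  exact ⟨⟨a + (1, 0), Or.inr (Or.inl h)⟩⟩

/-- An isomorphism of graphs induces an isomorphism of induced neighborhood
subgraphs. -/
def nbhdIso {V W : Type*} {G : SimpleGraph V} {H : SimpleGraph W} (f : G ≃g H)
    (a : V) : (G.induce (G.neighborSet a)) ≃g (H.induce (H.neighborSet (f a))) where
  toEquiv := f.mapNeighborSet a
  map_rel_iff' := by
    intro u v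
    exact f.map_adj_iff

/-- The Rook's graph and the Shrikhande graph are not isomorphic: every vertex
neighborhood of the Rook's graph induces a subgraph with two connected
components, every vertex neighborhood of the Shrikhande graph induces a
connected subgraph, and there is no graph isomorphism between them. -/
theorem rook_not_iso_shrikhande :
    (∀ a : Fin 4 × Fin 4,
      Nat.card (rookGraph.induce (rookGraph.neighborSet a)).ConnectedComponent = 2) ∧
    (∀ a : ZMod 4 × ZMod 4,
      (shrikhandeGraph.induce (shrikhandeGraph.neighborSet a)).Connected) ∧
    ¬ Nonempty (rookGraph ≃g shrikhandeGraph) := by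
  refine ⟨rook_nbhd, shrikhande_nbhd, ?_⟩
  rintro ⟨f⟩
  have h1 := rook_nbhd (0, 0)
  have h2 : Nat.card (shrikhandeGraph.induce
      (shrikhandeGraph.neighborSet (f (0, 0)))).ConnectedComponent = 1 := by
    have hc := shrikhande_nbhd (f (0, 0))
    rw [Nat.card_eq_one_iff_unique]
    exact ⟨hc.2.elim fun v => ⟨fun x y => SimpleGraph.ConnectedComponent.ind₂
      (fun a b => SimpleGraph.ConnectedComponent.sound (hc.1 a b)) x y⟩,
      hc.2.elim fun v => ⟨SimpleGraph.connectedComponentMk _ v⟩⟩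
  have := Nat.card_congr (nbhdIso f (0, 0)).connectedComponentEquiv
  omega
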